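/- For each integer l with 0 ≤ l ≤ m, the set B_l = {(x_1-1)^{i_1}···(x_m-1)^{i_m} : i_j ∈ {0,1}, i_1+···+i_m ≥ l} is a linear basis over F_2 of the l-th power M^l of the maximal ideal M of A. -/

import Mathlib

set_option synthInstance.maxHeartbeats 1000000
set_option maxHeartbeats 1000000

open MvPolynomial

noncomputable def gI (m : ℕ) (I : Finset (Fin m)) : MvPolynomial (Fin m) (ZMod 2) :=
  ∏ i ∈ I, (X i - 1)

noncomputable def XI (m : ℕ) (I : Finset (Fin m)) : MvPolynomial (Fin m) (ZMod 2) :=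
  ∏ i ∈ I, X i

noncomputable def relIdeal (m : ℕ) : Ideal (MvPolynomial (Fin m) (ZMod 2)) :=
  Ideal.span {p | ∃ i : Fin m, p = X i ^ 2 - 1}

abbrev Amb (m : ℕ) := MvPolynomial (Fin m) (ZMod 2) ⧸ relIdeal m

noncomputable def Mideal (m : ℕ) : Ideal (Amb m) :=
  Ideal.span {a | ∃ i : Fin m, a = Ideal.Quotient.mk (relIdeal m) (X i - 1)}

namespace JenningsAux

variable {m : ℕ}

noncomputable def bI (m : ℕ) (I : Finset (Fin m)) : Amb m :=
  Ideal.Quotient.mk (relIdeal m) (gI m I)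

lemma two_eq_zero : (2 : MvPolynomial (Fin m) (ZMod 2)) = 0 := by
  have h : ((1 : ZMod 2) + 1) = 0 := by decide
  calc (2 : MvPolynomial (Fin m) (ZMod 2)) = C 1 + C 1 := by rw [C_1]; ring
    _ = C ((1 : ZMod 2) + 1) := by rw [map_add]
    _ = 0 := by rw [h, C_0]

lemma mk_sq (i : Fin m) : Ideal.Quotient.mk (relIdeal m) ((X i - 1) * (X i - 1)) = 0 := by
  have h : (X i - 1) * (X i - 1) = X (R := ZMod 2) i ^ 2 - 1 := by
    have h2 := two_eq_zero (m := m)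
    linear_combination (1 - X (R := ZMod 2) i) * h2
  rw [h, Ideal.Quotient.eq_zero_iff_mem]
  exact Ideal.subset_span ⟨i, rfl⟩

lemma bI_empty : bI m ∅ = 1 := by
  simp [bI, gI]

lemma bI_singleton (i : Fin m) : bI m {i} = Ideal.Quotient.mk (relIdeal m) (X i - 1) := by
  simp [bI, gI]

lemma bI_mul_disjoint {I J : Finset (Fin m)} (h : Disjoint I J) :
    bI m I * bI m J = bI m (I ∪ J) := by
  unfold bI gI
  rw [← map_mul, ← Finset.prod_union h]

lemma bI_mul_not_disjoint {I J : Finset (Fin m)} (h : ¬ Disjoint I J) :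
    bI m I * bI m J = 0 := by
  obtain ⟨i, hiI, hiJ⟩ := Finset.not_disjoint_iff.mp h
  have hI : gI m I = (X i - 1) * gI m (I.erase i) := (Finset.mul_prod_erase I _ hiI).symm
  have hJ : gI m J = (X i - 1) * gI m (J.erase i) := (Finset.mul_prod_erase J _ hiJ).symm
  have : gI m I * gI m J = ((X i - 1) * (X i - 1)) * (gI m (I.erase i) * gI m (J.erase i)) := by
    rw [hI, hJ]; ring
  unfold bI
  rw [← map_mul, this, map_mul, mk_sq, zero_mul]

/-- The F₂-span of the b_I with |I| ≥ l. -/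
noncomputable def N (m l : ℕ) : Submodule (ZMod 2) (Amb m) :=
  Submodule.span (ZMod 2) {a | ∃ I : Finset (Fin m), l ≤ I.card ∧ a = bI m I}

lemma bI_mem_N {l : ℕ} {I : Finset (Fin m)} (h : l ≤ I.card) : bI m I ∈ N m l :=
  Submodule.subset_span ⟨I, h, rfl⟩

lemma bI_mul_bI_mem_N {l : ℕ} (K : Finset (Fin m)) {I : Finset (Fin m)} (h : l ≤ I.card) :
    bI m K * bI m I ∈ N m l := by
  by_cases hd : Disjoint K I
  · rw [bI_mul_disjoint hd]
    exact bI_mem_N (le_trans h (Finset.card_le_card Finset.subset_union_right))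
  · rw [bI_mul_not_disjoint hd]
    exact zero_mem _

lemma N_zero_eq_top : N m 0 = ⊤ := by
  rw [eq_top_iff]
  rintro a -
  obtain ⟨p, rfl⟩ := Ideal.Quotient.mk_surjective a
  induction p using MvPolynomial.induction_on with
  | C a =>
      have : Ideal.Quotient.mk (relIdeal m) (C a) = a • bI m ∅ := by
        rw [bI_empty]
        rw [show (C a : MvPolynomial (Fin m) (ZMod 2)) = a • 1 by
          rw [MvPolynomial.smul_eq_C_mul, mul_one]]
        calc Ideal.Quotient.mk (relIdeal m) (a • 1)
            = Ideal.Quotient.mkₐ (ZMod 2) (relIdeal m) (a • 1) := rfl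
          _ = a • Ideal.Quotient.mkₐ (ZMod 2) (relIdeal m) 1 := map_smul _ _ _
          _ = a • 1 := by rw [map_one]
      rw [this]
      exact Submodule.smul_mem _ _ (bI_mem_N (Nat.zero_le _))
  | add p q hp hq =>
      rw [map_add]; exact add_mem hp hq
  | mul_X p i hp =>
      rw [map_mul]
      have key : ∀ x ∈ N m 0, x * Ideal.Quotient.mk (relIdeal m) (X i) ∈ N m 0 := by
        intro x hx
        refine Submodule.span_induction ?_ ?_ ?_ ?_ hx
        · rintro _ ⟨K, -, rfl⟩
          have : Ideal.Quotient.mk (relIdeal m) (X (R := ZMod 2) i)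
              = bI m {i} + bI m ∅ := by
            rw [bI_singleton, bI_empty, ← map_one (Ideal.Quotient.mk (relIdeal m)),
              ← map_add]
            congr 1; ring
          rw [this, mul_add]
          exact add_mem (bI_mul_bI_mem_N K (Nat.zero_le _)) (bI_mul_bI_mem_N K (Nat.zero_le _))
        · simp
        · intro x y _ _ hx hy
          rw [add_mul]; exact add_mem hx hy
        · intro c x _ hx
          rw [smul_mul_assoc]; exact Submodule.smul_mem _ _ hx
      exact key _ hp

lemma mul_mem_N {l : ℕ} (a : Amb m) {x : Amb m} (hx : x ∈ N m l) : a * x ∈ N m l := by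
  have ha : a ∈ N m 0 := by rw [N_zero_eq_top]; trivial
  refine Submodule.span_induction ?_ ?_ ?_ ?_ hx
  · rintro _ ⟨I, hI, rfl⟩
    -- a * bI I ∈ N m l : induct on a
    refine Submodule.span_induction ?_ ?_ ?_ ?_ ha
    · rintro _ ⟨K, -, rfl⟩
      exact bI_mul_bI_mem_N K hI
    · simp
    · intro x y _ _ hx hy; rw [add_mul]; exact add_mem hx hy
    · intro c x _ hx; rw [smul_mul_assoc]; exact Submodule.smul_mem _ _ hx
  · simp
  · intro x y _ _ hx hy; rw [mul_add]; exact add_mem hx hy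
  · intro c x _ hx; rw [mul_smul_comm]; exact Submodule.smul_mem _ _ hx

lemma gen_mem_M (i : Fin m) : Ideal.Quotient.mk (relIdeal m) (X i - 1) ∈ Mideal m :=
  Ideal.subset_span ⟨i, rfl⟩

lemma bI_mem_pow (I : Finset (Fin m)) : bI m I ∈ Mideal m ^ I.card := by
  induction I using Finset.induction_on with
  | empty => simp [bI_empty]
  | @insert a s ha ih =>
      have : bI m (insert a s) = Ideal.Quotient.mk (relIdeal m) (X a - 1) * bI m s := by
        unfold bI gI
        rw [← map_mul, Finset.prod_insert ha]
      rw [this, Finset.card_insert_of_notMem ha, Ideal.IsTwoSided.pow_succ]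
      exact Ideal.mul_mem_mul (gen_mem_M a) ih

lemma N_le_pow (l : ℕ) : N m l ≤ Submodule.restrictScalars (ZMod 2) (Mideal m ^ l) := by
  rw [N, Submodule.span_le]
  rintro _ ⟨I, hI, rfl⟩
  exact Ideal.pow_le_pow_right hI (bI_mem_pow I)

lemma pow_le_N (l : ℕ) : Submodule.restrictScalars (ZMod 2) (Mideal m ^ l) ≤ N m l := by
  induction l with
  | zero =>
      rw [N_zero_eq_top]; exact le_top
  | succ l ih =>
      intro x hx
      have hx' : x ∈ Mideal m * Mideal m ^ l := by
        rw [Ideal.IsTwoSided.pow_succ] at hx; exact hx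
      refine Submodule.mul_induction_on hx' ?_ ?_
      · intro g hg y hy
        have hy' : y ∈ N m l := ih hy
        -- span induction on g over the ideal (A-module!) span
        refine Submodule.span_induction ?_ ?_ ?_ ?_ hg
        · rintro _ ⟨i, rfl⟩
          -- (x_i - 1) * y with y ∈ N m l
          refine Submodule.span_induction ?_ ?_ ?_ ?_ hy'
          · rintro _ ⟨I, hI, rfl⟩
            rw [← bI_singleton]
            by_cases hiI : i ∈ I
            · rw [bI_mul_not_disjoint (by simp [Finset.not_disjoint_iff]; exact hiI)]
              exact zero_mem _
            · rw [bI_mul_disjoint (by simpa using hiI), (Finset.insert_eq i I).symm]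
              exact bI_mem_N (by rw [Finset.card_insert_of_notMem hiI]; omega)
          · simp
          · intro x y _ _ hx hy; rw [mul_add]; exact add_mem hx hy
          · intro c x _ hx; rw [mul_smul_comm]; exact Submodule.smul_mem _ _ hx
        · simp
        · intro a b _ _ h1 h2; rw [add_mul]; exact add_mem h1 h2
        · intro a g' _ h1
          rw [smul_eq_mul, mul_assoc]
          exact mul_mem_N a h1
      · intro a b h1 h2; exact add_mem h1 h2

lemma N_eq_pow (l : ℕ) : N m l = Submodule.restrictScalars (ZMod 2) (Mideal m ^ l) :=
  le_antisymm (N_le_pow l) (pow_le_N l)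

lemma addself {V : Type*} [AddCommMonoid V] [Module (ZMod 2) V] (x : V) : x + x = 0 := by
  rw [← two_smul (ZMod 2) x, show (2 : ZMod 2) = 0 by decide, zero_smul]

lemma doublesum {m : ℕ} {V : Type*} [AddCommMonoid V] [Module (ZMod 2) V]
    (I : Finset (Fin m)) (F : Finset (Fin m) → V) :
    ∑ S ∈ I.powerset, ∑ T ∈ S.powerset, F T = F I := by
  induction I using Finset.induction_on generalizing F with
  | empty => simp
  | @insert a I ha ih =>
      have hinj : ∀ S ∈ I.powerset, ∀ S' ∈ I.powerset,
          insert a S = insert a S' → S = S' := by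
        intro S hS S' hS' h
        have haS : a ∉ S := fun h' => ha (Finset.mem_powerset.mp hS h')
        have haS' : a ∉ S' := fun h' => ha (Finset.mem_powerset.mp hS' h')
        rw [← Finset.erase_insert haS, ← Finset.erase_insert haS', h]
      have hdisj : Disjoint I.powerset (I.powerset.image (insert a)) := by
        rw [Finset.disjoint_left]
        intro S hS hS'
        obtain ⟨S', hS', rfl⟩ := Finset.mem_image.mp hS'
        exact ha (Finset.mem_powerset.mp hS (Finset.mem_insert_self a S'))
      have expand : ∀ G : Finset (Fin m) → V,
          ∑ S ∈ (insert a I).powerset, G S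
            = ∑ S ∈ I.powerset, G S + ∑ S ∈ I.powerset, G (insert a S) := by
        intro G
        rw [Finset.powerset_insert, Finset.sum_union hdisj, Finset.sum_image hinj]
      rw [expand]
      have inner : ∀ S ∈ I.powerset,
          ∑ T ∈ (insert a S).powerset, F T
            = ∑ T ∈ S.powerset, F T + ∑ T ∈ S.powerset, F (insert a T) := by
        intro S hS
        have haS : a ∉ S := fun h' => ha (Finset.mem_powerset.mp hS h')
        have hinjS : ∀ U ∈ S.powerset, ∀ U' ∈ S.powerset,
            insert a U = insert a U' → U = U' := by
          intro U hU U' hU' h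
          have h1 : a ∉ U := fun h' => haS (Finset.mem_powerset.mp hU h')
          have h2 : a ∉ U' := fun h' => haS (Finset.mem_powerset.mp hU' h')
          rw [← Finset.erase_insert h1, ← Finset.erase_insert h2, h]
        have hdisjS : Disjoint S.powerset (S.powerset.image (insert a)) := by
          rw [Finset.disjoint_left]
          intro U hU hU'
          obtain ⟨U', hU', rfl⟩ := Finset.mem_image.mp hU'
          exact haS (Finset.mem_powerset.mp hU (Finset.mem_insert_self a U'))
        rw [Finset.powerset_insert, Finset.sum_union hdisjS, Finset.sum_image hinjS]
      rw [Finset.sum_congr rfl inner, Finset.sum_add_distrib, ← add_assoc,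
        addself, zero_add, ih (fun T => F (insert a T))]


abbrev T (m : ℕ) := AddMonoidAlgebra (ZMod 2) (Fin m → ZMod 2)

noncomputable def eS (m : ℕ) (I : Finset (Fin m)) : Fin m → ZMod 2 :=
  fun j => if j ∈ I then 1 else 0

lemma eS_injective (m : ℕ) : Function.Injective (eS m) := by
  intro I J h
  ext j
  have := congrFun h j
  simp only [eS] at this
  by_cases hI : j ∈ I <;> by_cases hJ : j ∈ J <;> simp [hI, hJ] at this ⊢

lemma sum_eS {m : ℕ} (t : Finset (Fin m)) : ∑ i ∈ t, eS m {i} = eS m t := by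
  funext j
  rw [Finset.sum_apply]
  simp only [eS, Finset.mem_singleton]
  rw [Finset.sum_ite_eq t j (fun _ => (1 : ZMod 2))]

noncomputable def psi (m : ℕ) : MvPolynomial (Fin m) (ZMod 2) →ₐ[ZMod 2] T m :=
  aeval (fun i => AddMonoidAlgebra.single (eS m {i}) 1)

lemma psi_rel (m : ℕ) (i : Fin m) : psi m (X i ^ 2 - 1) = 0 := by
  have : psi m (X i) = AddMonoidAlgebra.single (eS m {i}) 1 := aeval_X _ _
  rw [map_sub, map_pow, map_one, this, sq, AddMonoidAlgebra.single_mul_single]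
  have h0 : eS m {i} + eS m {i} = 0 := addself _
  rw [h0, mul_one, ← AddMonoidAlgebra.one_def, sub_self]

noncomputable def psibar (m : ℕ) : Amb m →ₐ[ZMod 2] T m :=
  Ideal.Quotient.liftₐ (relIdeal m) (psi m) (by
    have h : relIdeal m ≤ RingHom.ker (psi m) := by
      rw [relIdeal, Ideal.span_le]
      rintro p ⟨i, rfl⟩
      exact psi_rel m i
    intro a ha
    exact RingHom.mem_ker.mp (h ha))

noncomputable def fB (m : ℕ) (I : Finset (Fin m)) : T m :=
  ∑ S ∈ I.powerset, AddMonoidAlgebra.single (eS m S) (1 : ZMod 2)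

lemma psibar_bI (m : ℕ) (I : Finset (Fin m)) : psibar m (bI m I) = fB m I := by
  have h1 : psibar m (bI m I) = psi m (gI m I) := by
    rfl
  rw [h1, gI, map_prod]
  have h2 : ∀ i : Fin m, psi m (X i - 1)
      = AddMonoidAlgebra.single (eS m {i}) 1 + 1 := by
    intro i
    have hx : psi m (X i) = AddMonoidAlgebra.single (eS m {i}) 1 := aeval_X _ _
    rw [map_sub, map_one, hx, sub_eq_add_neg,
      neg_eq_of_add_eq_zero_right (addself (1 : T m))]
  rw [Finset.prod_congr rfl (fun i _ => h2 i), Finset.prod_add]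
  refine Finset.sum_congr rfl ?_
  intro t _
  rw [Finset.prod_const_one, mul_one, AddMonoidAlgebra.prod_single,
    Finset.prod_const_one, sum_eS]

lemma filter_eS (m : ℕ) (S : Finset (Fin m)) :
    Finset.univ.filter (fun j => eS m S j = 1) = S := by
  ext j
  simp only [Finset.mem_filter, Finset.mem_univ, true_and, eS]
  by_cases h : j ∈ S <;> simp [h]

noncomputable def Lmap (m : ℕ) : T m →ₗ[ZMod 2] T m :=
  Finsupp.linearCombination (ZMod 2)
    (fun v : Fin m → ZMod 2 => fB m (Finset.univ.filter (fun j => v j = 1))) ∘ₗ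
    (AddMonoidAlgebra.coeffLinearEquiv (ZMod 2)).toLinearMap

lemma Lmap_single (m : ℕ) (v : Fin m → ZMod 2) :
    Lmap m (AddMonoidAlgebra.single v (1 : ZMod 2)) = fB m (Finset.univ.filter (fun j => v j = 1)) := by
  rw [Lmap]
  exact (Finsupp.linearCombination_single _ _ _).trans (one_smul _ _)

lemma Lmap_fB (m : ℕ) (I : Finset (Fin m)) :
    Lmap m (fB m I) = AddMonoidAlgebra.single (eS m I) (1 : ZMod 2) := by
  rw [fB, map_sum]
  have h : ∀ S ∈ I.powerset,
      Lmap m (AddMonoidAlgebra.single (eS m S) (1 : ZMod 2)) = fB m S := by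
    intro S _
    rw [Lmap_single, filter_eS]
  rw [Finset.sum_congr rfl h]
  exact doublesum I (fun S => AddMonoidAlgebra.single (eS m S) (1 : ZMod 2))

lemma fB_indep (m : ℕ) : LinearIndependent (ZMod 2) (fB m) := by
  have hs : LinearIndependent (ZMod 2)
      (fun v : Fin m → ZMod 2 => (AddMonoidAlgebra.single v (1 : ZMod 2) : T m)) := by
    have := (AddMonoidAlgebra.basis (Fin m → ZMod 2) (ZMod 2)).linearIndependent
    exact this
  have h1 : LinearIndependent (ZMod 2)
      (fun I : Finset (Fin m) => (AddMonoidAlgebra.single (eS m I) (1 : ZMod 2) : T m)) :=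
    hs.comp (eS m) (eS_injective m)
  refine LinearIndependent.of_comp (Lmap m) ?_
  have : (Lmap m) ∘ (fB m) = fun I => (AddMonoidAlgebra.single (eS m I) (1 : ZMod 2) : T m) :=
    funext (Lmap_fB m)
  rw [this]
  exact h1

lemma bI_indep (m : ℕ) : LinearIndependent (ZMod 2) (bI m) := by
  refine LinearIndependent.of_comp (psibar m).toLinearMap ?_
  have : ((psibar m).toLinearMap) ∘ (bI m) = fB m := funext fun I => by rw [Function.comp_apply, AlgHom.toLinearMap_apply]; exact psibar_bI m I
  rw [this]
  exact fB_indep m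

end JenningsAux

theorem stmt1 (m l : ℕ) (hl : l ≤ m) :
    ∃ B : Module.Basis {I : Finset (Fin m) // l ≤ I.card} (ZMod 2)
        (Submodule.restrictScalars (ZMod 2) (Mideal m ^ l)),
      ∀ I : {I : Finset (Fin m) // l ≤ I.card},
        (B I : Amb m) = Ideal.Quotient.mk (relIdeal m) (gI m I.1) := by
  classical
  have hli : LinearIndependent (ZMod 2)
      (fun I : {I : Finset (Fin m) // l ≤ I.card} => JenningsAux.bI m I.1) :=
    (JenningsAux.bI_indep m).comp Subtype.val Subtype.val_injective
  have hrange : Submodule.span (ZMod 2)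
        (Set.range (fun I : {I : Finset (Fin m) // l ≤ I.card} => JenningsAux.bI m I.1))
      = Submodule.restrictScalars (ZMod 2) (Mideal m ^ l) := by
    rw [← JenningsAux.N_eq_pow l, JenningsAux.N]
    congr 1
    ext a
    constructor
    · rintro ⟨⟨I, hI⟩, rfl⟩; exact ⟨I, hI, rfl⟩
    · rintro ⟨I, hI, rfl⟩; exact ⟨⟨I, hI⟩, rfl⟩
  refine ⟨(Module.Basis.span hli).map (LinearEquiv.ofEq _ _ hrange), ?_⟩
  intro I
  have h1 : (((Module.Basis.span hli).map (LinearEquiv.ofEq _ _ hrange)) I : Amb m)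
      = ((Module.Basis.span hli) I : Amb m) := by
    rw [Module.Basis.map_apply]
    exact congrArg _ rfl |>.trans (LinearEquiv.coe_ofEq_apply _ _)
  rw [h1, Module.Basis.span_apply]
  rfl
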